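/- Let D be a bounded strictly positive operator and T_t = D_t^{-1} − D^{-1} trace class. For fixed t, the set J_t = {α ∈ ℝ : D^{-1} + α T_t > 0} is an open interval. If moreover there is a unitary involution θ with θL = −Lθ and θD = Dθ, then J_t = J_{−t} and J_t is symmetric about α = 1/2: α ∈ J_t iff 1−α ∈ J_t. -/

import Mathlib

open NormedSpace RealInnerProductSpace

set_option synthInstance.maxHeartbeats 1000000
set_option maxHeartbeats 1000000
set_option linter.unusedSectionVars false

/-- `D_t = e^{tL} D e^{tL*}`. -/
noncomputable def Dt {H : Type*} [NormedAddCommGroup H] [InnerProductSpace ℝ H]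
    [CompleteSpace H] (L D : H →L[ℝ] H) (t : ℝ) : H →L[ℝ] H :=
  exp (t • L) * D * ContinuousLinearMap.adjoint (exp (t • L))

/-- `J_t = {α ∈ ℝ | D⁻¹ + α T_t > 0}`, where `T_t = D_t⁻¹ − D⁻¹` and `> 0` means
bounded below by a positive constant.  Here `Dinv t` is the inverse of `D_t`, so
`Dinv 0 = D⁻¹`. -/
def Jset {H : Type*} [NormedAddCommGroup H] [InnerProductSpace ℝ H] [CompleteSpace H]
    (Dinv : ℝ → H →L[ℝ] H) (t : ℝ) : Set ℝ :=
  {α : ℝ | ∃ c > 0, ∀ x : H, c * ‖x‖ ^ 2 ≤ ⟪x, (Dinv 0 + α • (Dinv t - Dinv 0)) x⟫}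

section Aux

variable {H : Type*} [NormedAddCommGroup H] [InnerProductSpace ℝ H] [CompleteSpace H]

/-- Positivity predicate: bounded below by a positive constant. -/
def PosOp (A : H →L[ℝ] H) : Prop :=
  ∃ c > 0, ∀ x : H, c * ‖x‖ ^ 2 ≤ ⟪x, A x⟫

lemma adj_mul (A B : H →L[ℝ] H) :
    ContinuousLinearMap.adjoint (A * B) =
      ContinuousLinearMap.adjoint B * ContinuousLinearMap.adjoint A := by
  rw [← ContinuousLinearMap.star_eq_adjoint, ← ContinuousLinearMap.star_eq_adjoint,
    ← ContinuousLinearMap.star_eq_adjoint, star_mul]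

lemma adj_one : ContinuousLinearMap.adjoint (1 : H →L[ℝ] H) = 1 := by
  rw [← ContinuousLinearMap.star_eq_adjoint, star_one]

lemma clm_inv_unique {a b c : H →L[ℝ] H} (hab : a * b = 1) (hca : c * a = 1) : c = b := by
  calc c = c * (a * b) := by rw [hab, mul_one]
    _ = c * a * b := by rw [mul_assoc]
    _ = b := by rw [hca, one_mul]

lemma posOp_conj {B : H →L[ℝ] H} {S S' : H →L[ℝ] H} (h : S' * S = 1) (hB : PosOp B) :
    PosOp (ContinuousLinearMap.adjoint S * B * S) := by
  obtain ⟨c, hc, hcx⟩ := hB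
  refine ⟨c / (‖S'‖ + 1) ^ 2, by positivity, fun x => ?_⟩
  have h1 : S' (S x) = x := by
    have := congrArg (fun T : H →L[ℝ] H => T x) h
    simpa using this
  have hx : ‖x‖ ≤ (‖S'‖ + 1) * ‖S x‖ := by
    calc ‖x‖ = ‖S' (S x)‖ := by rw [h1]
      _ ≤ ‖S'‖ * ‖S x‖ := S'.le_opNorm _
      _ ≤ (‖S'‖ + 1) * ‖S x‖ := by nlinarith [norm_nonneg (S x)]
  have h2 : ⟪x, (ContinuousLinearMap.adjoint S * B * S) x⟫ = ⟪S x, B (S x)⟫ := by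
    simp [ContinuousLinearMap.mul_apply, ContinuousLinearMap.adjoint_inner_right]
  rw [h2]
  have h3 := hcx (S x)
  have h4 : ‖x‖ ^ 2 ≤ ((‖S'‖ + 1) * ‖S x‖) ^ 2 := by
    have hnx := norm_nonneg x
    nlinarith
  have h5 : (0 : ℝ) < (‖S'‖ + 1) ^ 2 := by positivity
  calc c / (‖S'‖ + 1) ^ 2 * ‖x‖ ^ 2
      ≤ c / (‖S'‖ + 1) ^ 2 * ((‖S'‖ + 1) * ‖S x‖) ^ 2 :=
        mul_le_mul_of_nonneg_left h4 (by positivity)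
    _ = c * ‖S x‖ ^ 2 := by field_simp
    _ ≤ _ := h3

lemma posOp_conj_iff {B S S' : H →L[ℝ] H} (h : S' * S = 1) (h' : S * S' = 1) :
    PosOp (ContinuousLinearMap.adjoint S * B * S) ↔ PosOp B := by
  constructor
  · intro hP
    have key : ContinuousLinearMap.adjoint S' * (ContinuousLinearMap.adjoint S * B * S) * S'
        = B := by
      have h1 : ContinuousLinearMap.adjoint S' * ContinuousLinearMap.adjoint S = 1 := by
        rw [← adj_mul, h', adj_one]
      calc ContinuousLinearMap.adjoint S' * (ContinuousLinearMap.adjoint S * B * S) * S'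
          = (ContinuousLinearMap.adjoint S' * ContinuousLinearMap.adjoint S) * B * (S * S') := by
            simp only [mul_assoc]
        _ = B := by rw [h1, h', one_mul, mul_one]
    have := posOp_conj (S := S') (S' := S) h' hP
    rwa [key] at this
  · exact posOp_conj h

end Aux

/-- `J_t` is an open interval (open convex subset of `ℝ`); if moreover
there is a unitary involution `θ` with `θL = −Lθ` and `θD = Dθ`, then `J_{−t} = J_t` and
`J_t` is symmetric about `1/2`: `α ∈ J_t ↔ 1−α ∈ J_t`. -/
theorem stmt9 {H : Type*} [NormedAddCommGroup H] [InnerProductSpace ℝ H] [CompleteSpace H]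
    (L D : H →L[ℝ] H) (hD : IsSelfAdjoint D)
    (hDpos : ∃ c > 0, ∀ x : H, c * ‖x‖ ^ 2 ≤ ⟪x, D x⟫)
    (Dinv : ℝ → H →L[ℝ] H)
    (hDinv : ∀ t, Dt L D t * Dinv t = 1 ∧ Dinv t * Dt L D t = 1) :
    ∀ t : ℝ,
      (IsOpen (Jset Dinv t) ∧ Convex ℝ (Jset Dinv t)) ∧
      ∀ θ : H →L[ℝ] H,
        (∀ x y : H, ⟪θ x, θ y⟫ = ⟪x, y⟫) → θ * θ = 1 → θ * L = -(L * θ) → θ * D = D * θ →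
          Jset Dinv (-t) = Jset Dinv t ∧ ∀ α : ℝ, α ∈ Jset Dinv t ↔ 1 - α ∈ Jset Dinv t := by
  intro t
  constructor
  · constructor
    -- Openness
    · rw [Metric.isOpen_iff]
      rintro α ⟨c, hc, hcx⟩
      set T : H →L[ℝ] H := Dinv t - Dinv 0 with hT
      refine ⟨c / (2 * (‖T‖ + 1)), by positivity, fun β hβ => ?_⟩
      have hβα : |β - α| ≤ c / (2 * (‖T‖ + 1)) := by
        have := hβ
        rw [Metric.mem_ball, Real.dist_eq] at this
        linarith
      refine ⟨c / 2, by positivity, fun x => ?_⟩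
      have key : ⟪x, (Dinv 0 + β • T) x⟫
          = ⟪x, (Dinv 0 + α • T) x⟫ + (β - α) * ⟪x, T x⟫ := by
        simp only [ContinuousLinearMap.add_apply, ContinuousLinearMap.smul_apply,
          inner_add_right, real_inner_smul_right]
        ring
      have hTx : |⟪x, T x⟫| ≤ ‖T‖ * ‖x‖ ^ 2 := by
        calc |⟪x, T x⟫| ≤ ‖x‖ * ‖T x‖ := abs_real_inner_le_norm _ _
          _ ≤ ‖x‖ * (‖T‖ * ‖x‖) :=
            mul_le_mul_of_nonneg_left (T.le_opNorm x) (norm_nonneg x)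
          _ = ‖T‖ * ‖x‖ ^ 2 := by ring
      have habs : |(β - α) * ⟪x, T x⟫| ≤ (c / (2 * (‖T‖ + 1))) * ((‖T‖ + 1) * ‖x‖ ^ 2) := by
        rw [abs_mul]
        have h1 : |⟪x, T x⟫| ≤ (‖T‖ + 1) * ‖x‖ ^ 2 := by nlinarith [sq_nonneg ‖x‖]
        exact mul_le_mul hβα h1 (abs_nonneg _) (by positivity)
      have heq : (c / (2 * (‖T‖ + 1))) * ((‖T‖ + 1) * ‖x‖ ^ 2) = c / 2 * ‖x‖ ^ 2 := by
        have hne : (‖T‖ + 1) ≠ 0 := by positivity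
        field_simp
      rw [key]
      have h1 := hcx x
      have h2 : -(c / 2 * ‖x‖ ^ 2) ≤ (β - α) * ⟪x, T x⟫ := by
        have := neg_abs_le ((β - α) * ⟪x, T x⟫)
        rw [heq] at habs
        linarith
      nlinarith [sq_nonneg ‖x‖]
    -- Convexity
    · rintro α₁ ⟨c₁, hc₁, h₁⟩ α₂ ⟨c₂, hc₂, h₂⟩ a b ha hb hab
      have hmin : 0 < min c₁ c₂ := lt_min hc₁ hc₂
      have hcpos : 0 < a * c₁ + b * c₂ := by
        have h1 : a * min c₁ c₂ ≤ a * c₁ := mul_le_mul_of_nonneg_left (min_le_left _ _) ha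
        have h2 : b * min c₁ c₂ ≤ b * c₂ := mul_le_mul_of_nonneg_left (min_le_right _ _) hb
        have h3 : a * min c₁ c₂ + b * min c₁ c₂ = min c₁ c₂ := by
          rw [← add_mul, hab, one_mul]
        linarith
      refine ⟨a * c₁ + b * c₂, hcpos, fun x => ?_⟩
      have e : ⟪x, (Dinv 0 + (a • α₁ + b • α₂) • (Dinv t - Dinv 0)) x⟫
          = a * ⟪x, (Dinv 0 + α₁ • (Dinv t - Dinv 0)) x⟫
            + b * ⟪x, (Dinv 0 + α₂ • (Dinv t - Dinv 0)) x⟫ := by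
        simp only [ContinuousLinearMap.add_apply, ContinuousLinearMap.smul_apply,
          inner_add_right, real_inner_smul_right, smul_eq_mul]
        linear_combination (-⟪x, (Dinv 0) x⟫) * hab
      have e1 : a * (c₁ * ‖x‖ ^ 2) ≤ a * ⟪x, (Dinv 0 + α₁ • (Dinv t - Dinv 0)) x⟫ :=
        mul_le_mul_of_nonneg_left (h₁ x) ha
      have e2 : b * (c₂ * ‖x‖ ^ 2) ≤ b * ⟪x, (Dinv 0 + α₂ • (Dinv t - Dinv 0)) x⟫ :=
        mul_le_mul_of_nonneg_left (h₂ x) hb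
      rw [show (a * c₁ + b * c₂) * ‖x‖ ^ 2 = a * (c₁ * ‖x‖ ^ 2) + b * (c₂ * ‖x‖ ^ 2) by ring]
      rw [e]
      linarith
  -- The θ part
  · intro θ hθinner hθ2 hθL hθD
    letI : NormedAlgebra ℚ (H →L[ℝ] H) := NormedAlgebra.restrictScalars ℚ ℝ _
    set Et : H →L[ℝ] H := exp (t • L) with hEtdef
    set Emt : H →L[ℝ] H := exp ((-t) • L) with hEmtdef
    have hcomm : Commute (t • L) ((-t) • L) := by
      rw [neg_smul]
      exact (Commute.refl (t • L)).neg_right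
    have hEt1 : Et * Emt = 1 := by
      rw [hEtdef, hEmtdef, ← exp_add_of_commute hcomm, ← add_smul]
      norm_num [exp_zero]
    have hEt2 : Emt * Et = 1 := by
      rw [hEtdef, hEmtdef, ← exp_add_of_commute hcomm.symm, ← add_smul]
      norm_num [exp_zero]
    have hadjEt1 : ContinuousLinearMap.adjoint Emt * ContinuousLinearMap.adjoint Et = 1 := by
      rw [← adj_mul, hEt1, adj_one]
    have hadjEt2 : ContinuousLinearMap.adjoint Et * ContinuousLinearMap.adjoint Emt = 1 := by
      rw [← adj_mul, hEt2, adj_one]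
    -- θ is self-adjoint
    have hθθ : ContinuousLinearMap.adjoint θ * θ = 1 := by
      ext y
      refine ext_inner_left ℝ fun x => ?_
      simp [ContinuousLinearMap.mul_apply, ContinuousLinearMap.adjoint_inner_right, hθinner]
    have hθadj : ContinuousLinearMap.adjoint θ = θ := clm_inv_unique hθ2 hθθ
    -- θ conjugation facts
    have hcancel : ∀ X : H →L[ℝ] H, θ * (θ * X) = X := fun X => by
      rw [← mul_assoc, hθ2, one_mul]
    have hθLθ : θ * L * θ = -L := by
      rw [hθL]
      simp [mul_assoc, hθ2]
    have hu : θ * (t • L) * θ = (-t) • L := by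
      rw [mul_smul_comm, smul_mul_assoc, hθLθ, smul_neg, ← neg_smul]
    have hθE : θ * Et * θ = Emt := by
      have hconj : exp (θ * (t • L) * θ) = θ * exp (t • L) * θ :=
        exp_units_conj ⟨θ, θ, hθ2, hθ2⟩ (t • L)
      rw [hu] at hconj
      rw [hEtdef, hEmtdef, ← hconj]
    have hθadjE : θ * ContinuousLinearMap.adjoint Et * θ = ContinuousLinearMap.adjoint Emt := by
      rw [← hθE, adj_mul, adj_mul, hθadj, mul_assoc]
    have hθDθ : θ * D * θ = D := by
      rw [hθD, mul_assoc, hθ2, mul_one]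
    -- Dt conjugation
    have hDt_eq : Dt L D t = Et * D * ContinuousLinearMap.adjoint Et := rfl
    have hDtm_eq : Dt L D (-t) = Emt * D * ContinuousLinearMap.adjoint Emt := rfl
    have hDtconj : θ * Dt L D t * θ = Dt L D (-t) := by
      rw [hDt_eq, hDtm_eq]
      conv_rhs => rw [← hθadjE, ← hθE, ← hθDθ]
      simp only [mul_assoc, hcancel]
    -- Dinv conjugation
    have hDinvθ : θ * Dinv t * θ = Dinv (-t) := by
      have h1 : (θ * Dinv t * θ) * Dt L D (-t) = 1 := by
        rw [← hDtconj]
        simp only [mul_assoc, hcancel]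
        rw [← mul_assoc (Dinv t), (hDinv t).2, one_mul]
        exact hθ2
      exact clm_inv_unique (hDinv (-t)).1 h1
    -- Dinv 0 facts
    have hDt0 : Dt L D 0 = D := by
      show exp ((0 : ℝ) • L) * D * ContinuousLinearMap.adjoint (exp ((0 : ℝ) • L)) = D
      rw [zero_smul, exp_zero, adj_one, one_mul, mul_one]
    have hD1 : D * Dinv 0 = 1 := hDt0 ▸ (hDinv 0).1
    have hD2 : Dinv 0 * D = 1 := hDt0 ▸ (hDinv 0).2
    have hDinv0θ : θ * Dinv 0 * θ = Dinv 0 := by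
      have h1 : (θ * Dinv 0 * θ) * D = 1 := by
        rw [← hθDθ]
        simp only [mul_assoc, hcancel]
        rw [← mul_assoc (Dinv 0), hD2, one_mul]
        exact hθ2
      exact clm_inv_unique hD1 h1
    -- J(-t) = J(t)
    have hAeq : ∀ α : ℝ,
        ContinuousLinearMap.adjoint θ * (Dinv 0 + α • (Dinv t - Dinv 0)) * θ
          = Dinv 0 + α • (Dinv (-t) - Dinv 0) := by
      intro α
      rw [hθadj]
      have hdist : θ * (Dinv 0 + α • (Dinv t - Dinv 0)) * θ
          = θ * Dinv 0 * θ + α • (θ * Dinv t * θ - θ * Dinv 0 * θ) := by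
        simp only [mul_add, add_mul, mul_sub, sub_mul, mul_smul_comm, smul_mul_assoc]
      rw [hdist, hDinvθ, hDinv0θ]
    have hJsym : Jset Dinv (-t) = Jset Dinv t := by
      ext α
      show PosOp (Dinv 0 + α • (Dinv (-t) - Dinv 0)) ↔ PosOp (Dinv 0 + α • (Dinv t - Dinv 0))
      rw [← hAeq α]
      exact posOp_conj_iff hθ2 hθ2
    refine ⟨hJsym, fun α => ?_⟩
    -- Symmetry about 1/2
    have can1 : ∀ X : H →L[ℝ] H, Emt * (Et * X) = X := fun X => by
      rw [← mul_assoc, hEt2, one_mul]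
    have can2 : ∀ X : H →L[ℝ] H, Et * (Emt * X) = X := fun X => by
      rw [← mul_assoc, hEt1, one_mul]
    have can3 : ∀ X : H →L[ℝ] H,
        ContinuousLinearMap.adjoint Emt * (ContinuousLinearMap.adjoint Et * X) = X := fun X => by
      rw [← mul_assoc, hadjEt1, one_mul]
    have can4 : ∀ X : H →L[ℝ] H,
        ContinuousLinearMap.adjoint Et * (ContinuousLinearMap.adjoint Emt * X) = X := fun X => by
      rw [← mul_assoc, hadjEt2, one_mul]
    have canD1 : ∀ X : H →L[ℝ] H, D * (Dinv 0 * X) = X := fun X => by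
      rw [← mul_assoc, hD1, one_mul]
    have canD2 : ∀ X : H →L[ℝ] H, Dinv 0 * (D * X) = X := fun X => by
      rw [← mul_assoc, hD2, one_mul]
    -- Dinv t = adj Emt * Dinv 0 * Emt
    have hDinvt_eq : Dinv t = ContinuousLinearMap.adjoint Emt * Dinv 0 * Emt := by
      have h1 : Dt L D t * (ContinuousLinearMap.adjoint Emt * Dinv 0 * Emt) = 1 := by
        rw [hDt_eq]
        simp only [mul_assoc, can1, can2, can3, can4, canD1, canD2]
        exact hEt1
      have h2 : (ContinuousLinearMap.adjoint Emt * Dinv 0 * Emt) * Dt L D t = 1 := by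
        rw [hDt_eq]
        simp only [mul_assoc, can1, can2, can3, can4, canD1, canD2]
        exact hadjEt1
      exact clm_inv_unique h1 (hDinv t).2
    -- Dinv (-t) = adj Et * Dinv 0 * Et
    have hDinvmt_eq : Dinv (-t) = ContinuousLinearMap.adjoint Et * Dinv 0 * Et := by
      have h1 : Dt L D (-t) * (ContinuousLinearMap.adjoint Et * Dinv 0 * Et) = 1 := by
        rw [hDtm_eq]
        simp only [mul_assoc, can1, can2, can3, can4, canD1, canD2]
        exact hEt2
      exact clm_inv_unique h1 (hDinv (-t)).2
    -- adj Et * Dinv t * Et = Dinv 0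
    have hc1 : ContinuousLinearMap.adjoint Et * Dinv t * Et = Dinv 0 := by
      rw [hDinvt_eq]
      simp only [mul_assoc, can1, can2, can3, can4]
      rw [hEt2, mul_one]
    -- the conjugation identity for the half-symmetry
    have hAhalf : ContinuousLinearMap.adjoint Et * (Dinv 0 + (1 - α) • (Dinv t - Dinv 0)) * Et
        = Dinv 0 + α • (Dinv (-t) - Dinv 0) := by
      have hdist : ContinuousLinearMap.adjoint Et * (Dinv 0 + (1 - α) • (Dinv t - Dinv 0)) * Et
          = (ContinuousLinearMap.adjoint Et * Dinv 0 * Et)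
            + (1 - α) • (ContinuousLinearMap.adjoint Et * Dinv t * Et
              - ContinuousLinearMap.adjoint Et * Dinv 0 * Et) := by
        simp only [mul_add, add_mul, mul_sub, sub_mul, mul_smul_comm, smul_mul_assoc]
      rw [hdist, hc1, ← hDinvmt_eq]
      simp only [smul_sub, sub_smul, one_smul]
      abel
    calc α ∈ Jset Dinv t ↔ α ∈ Jset Dinv (-t) := by rw [hJsym]
      _ ↔ PosOp (Dinv 0 + α • (Dinv (-t) - Dinv 0)) := Iff.rfl
      _ ↔ PosOp (ContinuousLinearMap.adjoint Et * (Dinv 0 + (1 - α) • (Dinv t - Dinv 0)) * Et) :=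
          by rw [hAhalf]
      _ ↔ PosOp (Dinv 0 + (1 - α) • (Dinv t - Dinv 0)) := posOp_conj_iff hEt2 hEt1
      _ ↔ 1 - α ∈ Jset Dinv t := Iff.rfl
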